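/- arXiv:1604.00368 — 6 statements merged into one kernel-verified Lean document; each statement's English description precedes it below -/
import Mathlib

section
/- Define f : ℝ → ℝ by f(y) = (π/(2 y ln 10)) · sin(π · β_{d₁d₂}(y)) for d₁ + d₂/10 ≤ y < d₁ + (d₂+1)/10 (taken over all digits d₁ ∈ {1,…,9}, d₂ ∈ {0,…,9}), and f(y) = 0 for y < 1 or y ≥ 10, where β_{d₁d₂}(y) = log₁₀(10y/(10d₁ + d₂)) / log₁₀((10d₁ + d₂ + 1)/(10d₁ + d₂)). Then a random variable Y with density f is 2-digit Benford: for all digits d₁ ∈ {1,…,9} and d₂ ∈ {0,…,9}, the integral of f over [d₁ + d₂/10, d₁ + (d₂+1)/10) equals log₁₀(1 + 1/(10d₁ + d₂)). -/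
open MeasureTheory Real

/-- **The piecewise sine density is 2-digit Benford.**
Let `f(y) = (π / (2 y ln 10)) · sin (π β_{d₁d₂}(y))` on each two-digit interval
`[d₁ + d₂/10, d₁ + (d₂+1)/10)` (equivalently, with `10d₁ + d₂ = ⌊10y⌋` for
`1 ≤ y < 10`) and `f(y) = 0` outside `[1, 10)`, where
`β_{d₁d₂}(y) = log₁₀(10y/(10d₁+d₂)) / log₁₀((10d₁+d₂+1)/(10d₁+d₂))`.
Then for all digits `d₁ ∈ {1,…,9}`, `d₂ ∈ {0,…,9}`, the integral of `f` over
`[d₁ + d₂/10, d₁ + (d₂+1)/10)` equals `log₁₀ (1 + 1/(10d₁+d₂))`. -/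
theorem twoDigitBenford_density_digit_prob (f : ℝ → ℝ)
    (hf : ∀ y : ℝ, (1 : ℝ) ≤ y → y < 10 →
      f y = Real.pi / (2 * y * Real.log 10) *
        Real.sin (Real.pi *
          (Real.logb 10 (10 * y / (⌊10 * y⌋ : ℝ)) /
            Real.logb 10 (((⌊10 * y⌋ : ℝ) + 1) / (⌊10 * y⌋ : ℝ)))))
    (hf0 : ∀ y : ℝ, y < 1 ∨ 10 ≤ y → f y = 0) :
    ∀ d₁ d₂ : ℕ, 1 ≤ d₁ → d₁ ≤ 9 → d₂ ≤ 9 →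
      (∫ y in Set.Ico ((d₁ : ℝ) + (d₂ : ℝ) / 10) ((d₁ : ℝ) + ((d₂ : ℝ) + 1) / 10), f y)
        = Real.logb 10 (1 + 1 / (10 * (d₁ : ℝ) + (d₂ : ℝ))) := by
  intro d₁ d₂ hd1 hd9 hd2
  set x : ℝ := 10 * (d₁ : ℝ) + (d₂ : ℝ) with hxdef
  have hx10 : (10 : ℝ) ≤ x := by
    have : (1:ℝ) ≤ (d₁:ℝ) := by exact_mod_cast hd1
    have h2 : (0:ℝ) ≤ (d₂:ℝ) := Nat.cast_nonneg _
    rw [hxdef]; linarith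
  have hx99 : x ≤ 99 := by
    have : (d₁:ℝ) ≤ 9 := by exact_mod_cast hd9
    have h2 : (d₂:ℝ) ≤ 9 := by exact_mod_cast hd2
    rw [hxdef]; linarith
  have hxpos : (0:ℝ) < x := by linarith
  set L : ℝ := Real.logb 10 ((x + 1) / x) with hLdef
  have hLpos : 0 < L := by
    apply Real.logb_pos (by norm_num)
    rw [lt_div_iff₀ hxpos]; linarith
  have hlog10 : Real.log 10 ≠ 0 := by
    have := Real.log_pos (by norm_num : (1:ℝ) < 10); linarith
  have ha : (d₁ : ℝ) + (d₂ : ℝ) / 10 = x / 10 := by rw [hxdef]; ring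
  have hb : (d₁ : ℝ) + ((d₂ : ℝ) + 1) / 10 = (x + 1) / 10 := by rw [hxdef]; ring
  rw [ha, hb]
  have hcong : Set.EqOn f
      (fun y => Real.pi / (2 * y * Real.log 10) *
        Real.sin (Real.pi * (Real.logb 10 (10 * y / x) / L)))
      (Set.Ico (x / 10) ((x + 1) / 10)) := by
    intro y hy
    obtain ⟨hy1, hy2⟩ := hy
    have hy1' : (1:ℝ) ≤ y := by linarith [hx10]
    have hy10 : y < 10 := by linarith [hx99]
    have hfl : (⌊10 * y⌋ : ℝ) = x := by
      have : ⌊10 * y⌋ = (10 * (d₁ : ℤ) + (d₂ : ℤ)) := by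
        apply Int.floor_eq_iff.2
        constructor
        · push_cast; linarith
        · push_cast; linarith
      rw [this]; push_cast; rw [hxdef]
    rw [hf y hy1' hy10, hfl, hLdef]
  rw [MeasureTheory.setIntegral_congr_fun measurableSet_Ico hcong]
  have hab : x / 10 ≤ (x + 1) / 10 := by linarith
  rw [MeasureTheory.setIntegral_congr_set Ico_ae_eq_Ioc,
    ← intervalIntegral.integral_of_le hab]
  set F : ℝ → ℝ := fun y => -(L / 2) * Real.cos (Real.pi * (Real.log (10 * y / x) / Real.log 10 / L)) with hFdef
  have hderiv : ∀ y ∈ Set.uIcc (x / 10) ((x + 1) / 10),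
      HasDerivAt F (Real.pi / (2 * y * Real.log 10) *
        Real.sin (Real.pi * (Real.logb 10 (10 * y / x) / L))) y := by
    intro y hy
    rw [Set.uIcc_of_le hab] at hy
    obtain ⟨hy1, hy2⟩ := hy
    have hypos : 0 < y := by linarith
    have harg : (0:ℝ) < 10 * y / x := by positivity
    have h1 : HasDerivAt (fun y : ℝ => 10 * y / x) (10 / x) y := by
      simpa using ((hasDerivAt_id y).const_mul (10:ℝ)).div_const x
    have h2 : HasDerivAt (fun y => Real.log (10 * y / x)) (1 / y) y := by
      have := h1.log harg.ne'
      convert this using 1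
      field_simp
    have h3 : HasDerivAt
        (fun y => Real.pi * (Real.log (10 * y / x) / Real.log 10 / L))
        (Real.pi * (1 / y / Real.log 10 / L)) y :=
      ((h2.div_const _).div_const _).const_mul Real.pi
    have h4 := (h3.cos).const_mul (-(L / 2))
    refine h4.congr_deriv ?_
    rw [Real.logb]
    field_simp
  have hcont : ContinuousOn
      (fun y => Real.pi / (2 * y * Real.log 10) *
        Real.sin (Real.pi * (Real.logb 10 (10 * y / x) / L)))
      (Set.uIcc (x / 10) ((x + 1) / 10)) := by
    rw [Set.uIcc_of_le hab]
    have hlog : ContinuousOn (fun y => Real.log (10 * y / x))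
        (Set.Icc (x / 10) ((x + 1) / 10)) := by
      apply Real.continuousOn_log.comp (by fun_prop)
      intro y hy
      have hy1 : 0 < y := by have := hy.1; linarith
      have : (0:ℝ) < 10 * y / x := by positivity
      simp only [Set.mem_compl_iff, Set.mem_singleton_iff]
      exact this.ne'
    simp only [Real.logb]
    apply ContinuousOn.mul
    · refine continuousOn_const.div (by fun_prop) ?_
      intro y hy
      have hy1 : 0 < y := by have := hy.1; linarith
      positivity
    · exact Real.continuous_sin.comp_continuousOn
        (continuousOn_const.mul ((hlog.div_const _).div_const _))
  rw [intervalIntegral.integral_eq_sub_of_hasDerivAt hderiv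
    (hcont.intervalIntegrable)]
  have e1 : 10 * ((x + 1) / 10) / x = (x + 1) / x := by field_simp
  have e2 : 10 * (x / 10) / x = 1 := by field_simp
  have hLlog : L = Real.log ((x + 1) / x) / Real.log 10 := by rw [hLdef, Real.logb]
  have hcalc : F ((x + 1) / 10) - F (x / 10) = L := by
    rw [hFdef]
    simp only [e1, e2, Real.log_one]
    rw [← hLlog, div_self hLpos.ne', mul_one, Real.cos_pi]
    norm_num [Real.cos_zero]
  rw [hcalc, hLdef]
  congr 1
  field_simp
end

section
/- Define f : ℝ → ℝ by f(y) = (π/(2 y ln 10)) · sin(π · β_{11}(y)) for 1.1 ≤ y < 1.2, where β_{11}(y) = log₁₀(10y/11) / log₁₀(12/11). Then the integral of f over the interval [1.11, 1.12) is strictly less than log₁₀(1 + 1/111). Consequently, a random variable with this density on [1.1, 1.2) (extended analogously on the other two-digit intervals) is not 3-digit Benford. -/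
open MeasureTheory Real

section Aux

lemma aux_log10_lb : (2.3022 : ℝ) ≤ Real.log 10 := by
  have h2 := Real.log_two_gt_d9
  have h : Real.log (2 ^ 93 : ℝ) ≤ Real.log (10 ^ 28 : ℝ) :=
    Real.log_le_log (by positivity) (by norm_num)
  rw [Real.log_pow, Real.log_pow] at h
  push_cast at h
  nlinarith

lemma aux_log10_ub : Real.log 10 ≤ 2.30266 := by
  have h2 := Real.log_two_lt_d9
  have h : Real.log (10 ^ 59 : ℝ) ≤ Real.log (2 ^ 196 : ℝ) :=
    Real.log_le_log (by positivity) (by norm_num)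
  rw [Real.log_pow, Real.log_pow] at h
  push_cast at h
  nlinarith

lemma aux_log_lb (c a : ℝ) (hc0 : 0 ≤ c) (hc1 : c ≤ 1)
    (h : 1 + c + c ^ 2 / 2 + c ^ 3 * 4 / (6 * 3) ≤ a) : c ≤ Real.log a := by
  have ha : (0:ℝ) < a := by nlinarith
  rw [Real.le_log_iff_exp_le ha]
  have hb := Real.exp_bound' hc0 hc1 (n := 3) (by norm_num)
  have hs : (∑ m ∈ Finset.range 3, c ^ m / m.factorial) = 1 + c + c ^ 2 / 2 := by
    norm_num [Finset.sum_range_succ, Nat.factorial]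
  rw [hs] at hb
  norm_num [Nat.factorial] at hb
  nlinarith

lemma aux_log1211 : (0.08677 : ℝ) ≤ Real.log (12 / 11) := by
  apply aux_log_lb <;> norm_num

lemma aux_log112 : (0.008968 : ℝ) ≤ Real.log (112 / 111) := by
  apply aux_log_lb <;> norm_num

end Aux

/-- **The 2-digit Benford sine density is not 3-digit Benford.**
With `f(y) = (π / (2 y ln 10)) · sin (π · log₁₀(10y/11) / log₁₀(12/11))` for
`1.1 ≤ y < 1.2` (and `0` otherwise), the probability that the first three
significant digits are `1, 1, 1`, namely the integral of `f` over
`[1.11, 1.12)`, is strictly less than `log₁₀ (1 + 1/111)`; hence a random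
variable with this density is not 3-digit Benford. -/
theorem twoDigitBenford_density_not_threeDigit (f : ℝ → ℝ)
    (hf : ∀ y : ℝ, f y =
      if (1.1 : ℝ) ≤ y ∧ y < 1.2 then
        Real.pi / (2 * y * Real.log 10) *
          Real.sin (Real.pi * (Real.logb 10 (10 * y / 11) / Real.logb 10 (12 / 11)))
      else 0) :
    (∫ y in Set.Ico (1.11 : ℝ) 1.12, f y) < Real.logb 10 (1 + 1 / 111) := by
  have hπu : Real.pi ≤ 3.1416 := by linarith [Real.pi_lt_d6]
  have hπ0 : (0:ℝ) < Real.pi := Real.pi_pos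
  have hl10l := aux_log10_lb
  have hl10u := aux_log10_ub
  have hl10pos : (0:ℝ) < Real.log 10 := by linarith
  have hL2 := aux_log1211
  -- pointwise bound on f over the interval
  have hbound : ∀ y ∈ Set.Ico (1.11 : ℝ) 1.12, ‖f y‖ ≤ 0.3824 := by
    intro y hy
    obtain ⟨hy1, hy2⟩ := hy
    rw [hf y, if_pos ⟨by linarith, by linarith⟩]
    have hy0 : (0:ℝ) < y := by linarith
    have hL1n : 0 ≤ Real.log (10 * y / 11) :=
      Real.log_nonneg (by nlinarith)
    have hL1u : Real.log (10 * y / 11) ≤ 1 / 55 := by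
      have := Real.log_le_sub_one_of_pos (show (0:ℝ) < 10 * y / 11 by nlinarith)
      nlinarith
    -- simplify logb ratio
    have hratio : Real.logb 10 (10 * y / 11) / Real.logb 10 (12 / 11)
        = Real.log (10 * y / 11) / Real.log (12 / 11) := by
      rw [Real.logb, Real.logb]
      rw [div_div_div_cancel_right₀]
      exact ne_of_gt hl10pos
    rw [hratio]
    set x := Real.pi * (Real.log (10 * y / 11) / Real.log (12 / 11)) with hx
    have hL2pos : (0:ℝ) < Real.log (12 / 11) := by linarith
    have hx0 : 0 ≤ x := by positivity
    have hxu : x ≤ 0.6583 := by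
      have h1 : Real.log (10 * y / 11) / Real.log (12 / 11) ≤ (1/55) / 0.08677 :=
        div_le_div₀ (by norm_num) hL1u (by norm_num) hL2
      have h2 : x ≤ 3.1416 * ((1/55) / 0.08677) := by
        apply mul_le_mul hπu h1 (by positivity) (by norm_num)
      nlinarith
    have hsin : Real.sin x ≤ 0.622 := by
      have hb := Real.sin_bound (x := x) (by rw [abs_of_nonneg hx0]; linarith)
      rw [abs_of_nonneg hx0, abs_sub_le_iff] at hb
      nlinarith [hb.1, sq_nonneg x, sq_nonneg (x - 0.6583), sq_nonneg (x*x)]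
    have hsin0 : 0 ≤ Real.sin x :=
      Real.sin_nonneg_of_nonneg_of_le_pi hx0 (by linarith [Real.pi_gt_d6])
    have hfnn : 0 ≤ Real.pi / (2 * y * Real.log 10) * Real.sin x := by positivity
    rw [Real.norm_eq_abs, abs_of_nonneg hfnn]
    have hden : (2.22 : ℝ) * 2.3022 ≤ 2 * y * Real.log 10 := by nlinarith
    have h1 : Real.pi / (2 * y * Real.log 10) ≤ 3.1416 / (2.22 * 2.3022) :=
      div_le_div₀ (by norm_num) hπu (by norm_num) hden
    calc Real.pi / (2 * y * Real.log 10) * Real.sin x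
        ≤ 3.1416 / (2.22 * 2.3022) * 0.622 := by
          apply mul_le_mul h1 hsin hsin0 (by norm_num)
      _ ≤ 0.3824 := by norm_num
  -- measurability of f
  have hfm : AEStronglyMeasurable f (volume.restrict (Set.Ico (1.11:ℝ) 1.12)) := by
    have : f = fun y => if (1.1 : ℝ) ≤ y ∧ y < 1.2 then
        Real.pi / (2 * y * Real.log 10) *
          Real.sin (Real.pi * (Real.logb 10 (10 * y / 11) / Real.logb 10 (12 / 11)))
      else 0 := funext hf
    rw [this]
    simp only [Real.logb]
    apply Measurable.aestronglyMeasurable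
    apply Measurable.ite
    · exact measurableSet_Ico (a := (1.1:ℝ)) (b := 1.2)
    · exact (measurable_const.div (((measurable_const.mul measurable_id).mul
        measurable_const))).mul (Real.continuous_sin.measurable.comp
        (measurable_const.mul (((Real.measurable_log.comp
          ((measurable_id.const_mul (10:ℝ)).div_const 11)).div_const _).div_const _)))
    · exact measurable_const
  have hvol : volume (Set.Ico (1.11:ℝ) 1.12) = ENNReal.ofReal 0.01 := by
    rw [Real.volume_Ico]; norm_num
  have hfin : volume (Set.Ico (1.11:ℝ) 1.12) < ⊤ := by
    rw [hvol]; exact ENNReal.ofReal_lt_top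
  have key := norm_setIntegral_le_of_norm_le_const hfin hbound
  rw [measureReal_def, hvol, ENNReal.toReal_ofReal (by norm_num)] at key
  have hLHS : (∫ y in Set.Ico (1.11 : ℝ) 1.12, f y) ≤ 0.3824 * 0.01 :=
    le_trans (le_abs_self _) key
  -- lower bound for RHS
  have hRHS : (0.008968 : ℝ) / 2.30266 ≤ Real.logb 10 (1 + 1 / 111) := by
    have h111 : (1:ℝ) + 1/111 = 112/111 := by norm_num
    rw [Real.logb, h111]
    exact div_le_div₀ (by linarith [aux_log112]) aux_log112 (by linarith) hl10u
  have : (0.3824 : ℝ) * 0.01 < 0.008968 / 2.30266 := by norm_num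
  linarith
end

section
/- Let Y be a random variable taking values in the positive reals and suppose X = log₁₀ Y has probability density function g : ℝ → ℝ (nonnegative, integrable, integrating to 1). For x ∈ [0,1) define g†(x) = Σ_{k ∈ ℤ} g(x + k). Then for any m ≥ 1 and digits d₁ ∈ {1,…,9}, d₂,…,d_m ∈ {0,…,9} with x_m = 10^{m−1}d₁ + ⋯ + d_m, the expectation E[S_{d₁⋯d_m} Y] = E[ 1{first m significant digits of Y are d₁,…,d_m} · S(Y) ] equals the integral from log₁₀(x_m/10^{m−1}) to log₁₀((x_m+1)/10^{m−1}) of 10^x · g†(x) dx. -/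
open MeasureTheory Real
open scoped ENNReal

/-- The base-10 significand `S(y) = 10 ^ (log₁₀ y − ⌊log₁₀ y⌋) ∈ [1,10)`. -/
noncomputable def signif (y : ℝ) : ℝ :=
  (10 : ℝ) ^ (Real.logb 10 y - (⌊Real.logb 10 y⌋ : ℝ))

/-- `d : Fin n → ℕ` is a valid digit tuple: every digit is at most 9 and the
leading digit (index 0) is at least 1. -/
def IsDigitTuple (n : ℕ) (d : Fin n → ℕ) : Prop :=
  (∀ i, d i ≤ 9) ∧ ∀ i : Fin n, (i : ℕ) = 0 → 1 ≤ d i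

/-- `xₙ = 10^(n−1) d₁ + 10^(n−2) d₂ + ⋯ + dₙ` for a digit tuple `d`. -/
def digitVal (n : ℕ) (d : Fin n → ℕ) : ℕ :=
  ∑ i : Fin n, d i * 10 ^ (n - 1 - (i : ℕ))

/-- `y > 0` has first `n` significant digits given by the tuple `d` iff
`⌊10^(n−1) · S(y)⌋ = xₙ`. -/
def HasFirstDigits (n : ℕ) (d : Fin n → ℕ) (y : ℝ) : Prop :=
  ⌊(10 : ℝ) ^ (n - 1) * signif y⌋ = (digitVal n d : ℤ)

/-- A random variable `Y` on `(Ω, P)` is `n`-digit Benford if for every valid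
digit tuple `d`, the probability that the first `n` significant digits of `Y`
are `d₁, …, dₙ` equals `log₁₀ (1 + 1/xₙ)`. -/
def NDigitBenford {Ω : Type*} [MeasurableSpace Ω] (P : Measure Ω) (Y : Ω → ℝ)
    (n : ℕ) : Prop :=
  ∀ d : Fin n → ℕ, IsDigitTuple n d →
    P {ω | HasFirstDigits n d (Y ω)}
      = ENNReal.ofReal (Real.logb 10 (1 + 1 / (digitVal n d : ℝ)))

/-- The expected significand sum `E[S_{d₁⋯dₙ} Y]`: the expectation of `S(Y)`
restricted to the event that the first `n` significant digits of `Y` are `d`. -/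
noncomputable def expSignifSum {Ω : Type*} [MeasurableSpace Ω] (P : Measure Ω)
    (Y : Ω → ℝ) (n : ℕ) (d : Fin n → ℕ) : ℝ :=
  ∫ ω, Set.indicator {ω | HasFirstDigits n d (Y ω)} (fun ω => signif (Y ω)) ω ∂P

lemma nine_geom (n : ℕ) : (∑ j ∈ Finset.range n, 9 * 10 ^ j) + 1 = 10 ^ n := by
  induction n with
  | zero => simp
  | succ n ih => rw [Finset.sum_range_succ, pow_succ]; omega

lemma digitVal_lower {m : ℕ} (hm : 1 ≤ m) (d : Fin m → ℕ) (hd : IsDigitTuple m d) :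
    10 ^ (m - 1) ≤ digitVal m d := by
  rw [digitVal]
  calc 10 ^ (m - 1) = 1 * 10 ^ (m - 1 - ((⟨0, hm⟩ : Fin m) : ℕ)) := by simp
    _ ≤ d ⟨0, hm⟩ * 10 ^ (m - 1 - ((⟨0, hm⟩ : Fin m) : ℕ)) :=
        Nat.mul_le_mul_right _ (hd.2 ⟨0, hm⟩ rfl)
    _ ≤ ∑ i : Fin m, d i * 10 ^ (m - 1 - (i : ℕ)) :=
        Finset.single_le_sum (f := fun i : Fin m => d i * 10 ^ (m - 1 - (i : ℕ)))
          (fun i _ => Nat.zero_le _) (Finset.mem_univ _)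

lemma digitVal_upper {m : ℕ} (d : Fin m → ℕ) (hd : IsDigitTuple m d) :
    digitVal m d + 1 ≤ 10 ^ m := by
  have h1 : digitVal m d ≤ ∑ i : Fin m, 9 * 10 ^ (m - 1 - (i : ℕ)) :=
    Finset.sum_le_sum fun i _ => Nat.mul_le_mul_right _ (hd.1 i)
  have h2 : ∑ i : Fin m, 9 * 10 ^ (m - 1 - (i : ℕ))
      = ∑ j ∈ Finset.range m, 9 * 10 ^ (m - 1 - j) :=
    Fin.sum_univ_eq_sum_range (fun j => 9 * 10 ^ (m - 1 - j)) m
  have h3 : ∑ j ∈ Finset.range m, 9 * 10 ^ (m - 1 - j)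
      = ∑ j ∈ Finset.range m, 9 * 10 ^ j :=
    Finset.sum_range_reflect (fun j => 9 * 10 ^ j) m
  have h4 := nine_geom m
  omega

/-- **Expected significand sum via the wrapped density.**
If `X = log₁₀ Y` has probability density `g`, and `g†(x) = Σ_{k ∈ ℤ} g(x + k)`,
then for any digit tuple `d₁, …, d_m` with `x_m = 10^(m−1) d₁ + ⋯ + d_m`,
`E[S_{d₁⋯d_m} Y] = ∫_{log₁₀(x_m/10^(m−1))}^{log₁₀((x_m+1)/10^(m−1))} 10^x g†(x) dx`. -/
theorem expSignifSum_eq_integral_wrapped {Ω : Type*} [MeasurableSpace Ω]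
    (P : Measure Ω) [IsProbabilityMeasure P] (Y : Ω → ℝ) (hY : Measurable Y)
    (hYpos : ∀ ω, 0 < Y ω) (g : ℝ → ℝ) (hg0 : ∀ x, 0 ≤ g x) (hgInt : Integrable g)
    (hgpdf : P.map (fun ω => Real.logb 10 (Y ω))
      = volume.withDensity (fun x => ENNReal.ofReal (g x)))
    (m : ℕ) (hm : 1 ≤ m) (d : Fin m → ℕ) (hd : IsDigitTuple m d) :
    expSignifSum P Y m d
      = ∫ x in Real.logb 10 ((digitVal m d : ℝ) / 10 ^ (m - 1))..
            Real.logb 10 (((digitVal m d : ℝ) + 1) / 10 ^ (m - 1)),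
          (10 : ℝ) ^ x * ∑' k : ℤ, g (x + (k : ℝ)) := by
  have hten : (1:ℝ) < 10 := by norm_num
  set N : ℕ := digitVal m d with hN
  set C : ℝ := (10:ℝ) ^ (m - 1) with hC
  have hCpos : 0 < C := by rw [hC]; positivity
  have hNlow : (10:ℕ) ^ (m - 1) ≤ N := digitVal_lower hm d hd
  have hNhigh : N + 1 ≤ 10 ^ m := digitVal_upper d hd
  have hClow : C ≤ (N:ℝ) := by
    rw [hC]
    calc ((10:ℝ)) ^ (m-1) = ((10 ^ (m-1) : ℕ) : ℝ) := by push_cast; ring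
      _ ≤ (N:ℝ) := by exact_mod_cast hNlow
  have hNpos : (0:ℝ) < N := lt_of_lt_of_le hCpos hClow
  have hNC1 : 1 ≤ (N:ℝ) / C := (one_le_div hCpos).mpr hClow
  have hNCpos : 0 < (N:ℝ) / C := lt_of_lt_of_le zero_lt_one hNC1
  have hN1Cpos : 0 < ((N:ℝ) + 1) / C := div_pos (by linarith) hCpos
  set a := Real.logb 10 ((N:ℝ) / C) with ha_def
  set b := Real.logb 10 (((N:ℝ) + 1) / C) with hb_def
  have ha0 : 0 ≤ a := Real.logb_nonneg hten hNC1
  have hb1 : b ≤ 1 := by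
    rw [hb_def, Real.logb_le_iff_le_rpow hten hN1Cpos, Real.rpow_one,
      div_le_iff₀ hCpos]
    have h10m : C * (10:ℝ) = 10 ^ m := by
      rw [hC, ← pow_succ]
      congr 1
      omega
    have hcast : (N:ℝ) + 1 ≤ (10:ℝ) ^ m := by
      calc (N:ℝ) + 1 = ((N + 1 : ℕ) : ℝ) := by push_cast; ring
        _ ≤ ((10 ^ m : ℕ) : ℝ) := by exact_mod_cast hNhigh
        _ = (10:ℝ) ^ m := by push_cast; ring
    linarith [h10m]
  have hab : a ≤ b := by
    rw [ha_def, hb_def]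
    apply Real.logb_le_logb_of_le hten hNCpos
    gcongr
    linarith
  -- characterization of the floor condition
  have hfloor : ∀ x : ℝ, (⌊C * (10:ℝ) ^ x⌋ = (N:ℤ)) ↔ x ∈ Set.Ico a b := by
    intro x
    rw [mul_comm C ((10:ℝ) ^ x), Int.floor_eq_iff, Set.mem_Ico, ha_def, hb_def,
      Real.logb_le_iff_le_rpow hten hNCpos, Real.lt_logb_iff_rpow_lt hten hN1Cpos,
      div_le_iff₀ hCpos, lt_div_iff₀ hCpos]
    push_cast
    tauto
  -- the periodized integrand
  set φ : ℝ → ℝ :=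
    fun t => Set.indicator (Set.Ico a b) (fun s => (10:ℝ) ^ s) (Int.fract t) with hφ
  have hrpow_meas : Measurable fun s : ℝ => (10:ℝ) ^ s :=
    (continuous_const.rpow continuous_id fun _ => Or.inl (by norm_num)).measurable
  have hφm : Measurable φ :=
    (hrpow_meas.indicator measurableSet_Ico).comp measurable_fract
  have hφ0 : ∀ t, 0 ≤ φ t := fun t =>
    Set.indicator_nonneg (fun s _ => Real.rpow_nonneg (by norm_num) s) _
  have hφper : ∀ (x : ℝ) (k : ℤ), φ (x + (k:ℝ)) = φ x := by
    intro x k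
    simp only [hφ, Int.fract_add_intCast]
  -- pointwise identification
  have hpt : ∀ ω, Set.indicator {ω | HasFirstDigits m d (Y ω)} (fun ω => signif (Y ω)) ω
      = φ (Real.logb 10 (Y ω)) := by
    intro ω
    have hsig : signif (Y ω) = (10:ℝ) ^ Int.fract (Real.logb 10 (Y ω)) := by
      rw [signif, Int.self_sub_floor]
    have hiff : (ω ∈ {ω | HasFirstDigits m d (Y ω)})
        ↔ Int.fract (Real.logb 10 (Y ω)) ∈ Set.Ico a b := by
      rw [Set.mem_setOf_eq, HasFirstDigits, hsig, ← hC, ← hN]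
      exact hfloor _
    simp only [hφ]
    by_cases hmem : ω ∈ {ω | HasFirstDigits m d (Y ω)}
    · rw [Set.indicator_of_mem hmem, Set.indicator_of_mem (hiff.mp hmem)]
      exact hsig
    · rw [Set.indicator_of_notMem hmem,
        Set.indicator_of_notMem (fun h => hmem (hiff.mpr h))]
  have hX : Measurable fun ω => Real.logb 10 (Y ω) := by
    simp only [Real.logb]
    exact (Real.measurable_log.comp hY).div_const _
  -- the wrapped density
  set w : ℝ → ℝ≥0∞ := fun x => ENNReal.ofReal (g x) with hw
  have hwm : AEMeasurable w volume := hgInt.aestronglyMeasurable.aemeasurable.ennreal_ofReal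
  have hwk : ∀ k : ℤ, AEMeasurable (fun x => w (x + (k:ℝ))) volume := fun k =>
    hwm.comp_quasiMeasurePreserving
      (measurePreserving_add_right volume (k:ℝ)).quasiMeasurePreserving
  set G : ℝ → ℝ≥0∞ := fun x => ∑' k : ℤ, w (x + (k:ℝ)) with hG
  have hGm : AEMeasurable G volume := AEMeasurable.ennreal_tsum hwk
  -- translation
  have htrans : ∀ (F : ℝ → ℝ≥0∞) (k : ℤ),
      ∫⁻ x in Set.Ico (0:ℝ) 1, F (x + (k:ℝ)) = ∫⁻ x in Set.Ico (k:ℝ) ((k:ℝ)+1), F x := by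
    intro F k
    rw [(measurePreserving_add_right volume (k:ℝ)).setLIntegral_comp_emb
      (measurableEmbedding_addRight (k:ℝ)) F (Set.Ico 0 1), Set.image_add_const_Ico,
      zero_add, add_comm (1:ℝ) (k:ℝ)]
  have hdisj : Pairwise (Function.onFun Disjoint fun k : ℤ => Set.Ico (k:ℝ) ((k:ℝ)+1)) := by
    intro i j hij
    simp only [Function.onFun]
    rw [Set.Ico_disjoint_Ico]
    rcases lt_or_gt_of_ne hij with h | h
    · have h' : (i:ℝ) + 1 ≤ (j:ℝ) := by exact_mod_cast h
      exact le_trans (min_le_left _ _) (h'.trans (le_max_right _ _))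
    · have h' : (j:ℝ) + 1 ≤ (i:ℝ) := by exact_mod_cast h
      exact le_trans (min_le_right _ _) (h'.trans (le_max_left _ _))
  have hIcoab_sub : Set.Ico a b ⊆ Set.Ico (0:ℝ) 1 := Set.Ico_subset_Ico ha0 hb1
  have hφm' : Measurable fun x => ENNReal.ofReal (φ x) := hφm.ennreal_ofReal
  -- the key lintegral computation
  have key : ∫⁻ x, w x * ENNReal.ofReal (φ x) ∂volume
      = ∫⁻ x in Set.Ico a b, G x * ENNReal.ofReal ((10:ℝ) ^ x) ∂volume := by
    calc ∫⁻ x, w x * ENNReal.ofReal (φ x) ∂volume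
        = ∫⁻ x in ⋃ k : ℤ, Set.Ico (k:ℝ) ((k:ℝ)+1), w x * ENNReal.ofReal (φ x) ∂volume := by
          rw [iUnion_Ico_intCast, Measure.restrict_univ]
      _ = ∑' k : ℤ, ∫⁻ x in Set.Ico (k:ℝ) ((k:ℝ)+1), w x * ENNReal.ofReal (φ x) ∂volume :=
          lintegral_iUnion (fun _ => measurableSet_Ico) hdisj _
      _ = ∑' k : ℤ, ∫⁻ x in Set.Ico (0:ℝ) 1,
            w (x + (k:ℝ)) * ENNReal.ofReal (φ (x + (k:ℝ))) ∂volume :=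
          (tsum_congr fun k => (htrans (fun x => w x * ENNReal.ofReal (φ x)) k).symm)
      _ = ∑' k : ℤ, ∫⁻ x in Set.Ico (0:ℝ) 1,
            w (x + (k:ℝ)) * ENNReal.ofReal (φ x) ∂volume :=
          tsum_congr fun k => lintegral_congr fun x => by rw [hφper x k]
      _ = ∫⁻ x in Set.Ico (0:ℝ) 1, ∑' k : ℤ,
            w (x + (k:ℝ)) * ENNReal.ofReal (φ x) ∂volume :=
          (lintegral_tsum fun k => ((hwk k).restrict.mul hφm'.aemeasurable.restrict)).symm
      _ = ∫⁻ x in Set.Ico (0:ℝ) 1, G x * ENNReal.ofReal (φ x) ∂volume :=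
          lintegral_congr fun x => (ENNReal.tsum_mul_right).symm ▸ rfl
      _ = ∫⁻ x in Set.Ico (0:ℝ) 1, Set.indicator (Set.Ico a b)
            (fun x => G x * ENNReal.ofReal ((10:ℝ) ^ x)) x ∂volume := by
          refine setLIntegral_congr_fun measurableSet_Ico (fun x hx => ?_)
          have hfr : Int.fract x = x := Int.fract_eq_self.mpr ⟨hx.1, hx.2⟩
          simp only [hφ, hfr]
          by_cases hmem : x ∈ Set.Ico a b
          · rw [Set.indicator_of_mem hmem, Set.indicator_of_mem hmem]
          · rw [Set.indicator_of_notMem hmem, Set.indicator_of_notMem hmem,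
              ENNReal.ofReal_zero, mul_zero]
      _ = ∫⁻ x in Set.Ico a b, G x * ENNReal.ofReal ((10:ℝ) ^ x) ∂volume := by
          rw [lintegral_indicator measurableSet_Ico,
            Measure.restrict_restrict measurableSet_Ico,
            Set.inter_eq_self_of_subset_left hIcoab_sub]
  -- finiteness of the wrapped density on [0,1)
  have hInt01 : ∫⁻ x in Set.Ico (0:ℝ) 1, G x ∂volume ≠ ⊤ := by
    have heq : ∫⁻ x in Set.Ico (0:ℝ) 1, G x ∂volume = ∫⁻ x, w x ∂volume := by
      calc ∫⁻ x in Set.Ico (0:ℝ) 1, G x ∂volume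
          = ∑' k : ℤ, ∫⁻ x in Set.Ico (0:ℝ) 1, w (x + (k:ℝ)) ∂volume :=
            lintegral_tsum fun k => (hwk k).restrict
        _ = ∑' k : ℤ, ∫⁻ x in Set.Ico (k:ℝ) ((k:ℝ)+1), w x ∂volume :=
            tsum_congr fun k => htrans w k
        _ = ∫⁻ x in ⋃ k : ℤ, Set.Ico (k:ℝ) ((k:ℝ)+1), w x ∂volume :=
            (lintegral_iUnion (fun _ => measurableSet_Ico) hdisj _).symm
        _ = ∫⁻ x, w x ∂volume := by rw [iUnion_Ico_intCast, Measure.restrict_univ]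
    rw [heq]
    have hfi : ∫⁻ x, (‖g x‖₊ : ℝ≥0∞) ∂volume < ⊤ := hgInt.hasFiniteIntegral
    refine (lt_of_le_of_lt (lintegral_mono fun x => ?_) hfi).ne
    rw [hw]
    exact (Real.enorm_eq_ofReal (hg0 x)).ge
  have hsubIco : Set.Ico a b ⊆ Set.Icc (0:ℝ) 1 := fun x hx =>
    ⟨le_trans ha0 hx.1, le_trans hx.2.le hb1⟩
  have hIcc : ∫⁻ x in Set.Icc (0:ℝ) 1, G x ∂volume ≠ ⊤ := by
    rw [← Measure.restrict_congr_set Ico_ae_eq_Icc]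
    exact hInt01
  have hfinIco : ∀ᵐ x ∂(volume.restrict (Set.Ico a b)), G x < ⊤ :=
    ae_restrict_of_ae_restrict_of_subset hsubIco (ae_lt_top' hGm.restrict hIcc)
  -- tsum identity
  have htsum : ∀ x : ℝ, (∑' k : ℤ, g (x + (k:ℝ))) = (G x).toReal := by
    intro x
    by_cases hs : Summable fun k : ℤ => g (x + (k:ℝ))
    · rw [hG]
      simp only [hw]
      rw [← ENNReal.ofReal_tsum_of_nonneg (fun k => hg0 _) hs,
        ENNReal.toReal_ofReal (tsum_nonneg fun k => hg0 _)]
    · have hne : G x = ⊤ := by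
        by_contra hfin'
        apply hs
        exact (summable_congr fun k => ENNReal.toReal_ofReal (hg0 _)).mp
          (ENNReal.summable_toReal hfin')
      rw [tsum_eq_zero_of_not_summable hs, hne, ENNReal.toReal_top]
  -- LHS
  have hLHS : expSignifSum P Y m d
      = (∫⁻ x in Set.Ico a b, G x * ENNReal.ofReal ((10:ℝ) ^ x) ∂volume).toReal := by
    rw [expSignifSum]
    rw [show (fun ω => Set.indicator {ω | HasFirstDigits m d (Y ω)}
        (fun ω => signif (Y ω)) ω) = fun ω => φ (Real.logb 10 (Y ω)) from funext hpt]
    rw [← integral_map hX.aemeasurable hφm.aestronglyMeasurable, hgpdf]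
    rw [integral_eq_lintegral_of_nonneg_ae (ae_of_all _ hφ0) hφm.aestronglyMeasurable]
    rw [lintegral_withDensity_eq_lintegral_mul₀ hwm hφm'.aemeasurable]
    rw [← key]
    rfl
  -- RHS
  have hRHS : (∫ x in a..b, (10:ℝ) ^ x * ∑' k : ℤ, g (x + (k:ℝ)))
      = (∫⁻ x in Set.Ico a b, G x * ENNReal.ofReal ((10:ℝ) ^ x) ∂volume).toReal := by
    rw [intervalIntegral.integral_of_le hab]
    have hfun : (fun x => (10:ℝ) ^ x * ∑' k : ℤ, g (x + (k:ℝ)))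
        = fun x => (10:ℝ) ^ x * (G x).toReal := funext fun x => by rw [htsum]
    rw [show (∫ x in Set.Ioc a b, (10:ℝ) ^ x * ∑' k : ℤ, g (x + (k:ℝ)))
        = ∫ x in Set.Ioc a b, (10:ℝ) ^ x * (G x).toReal from by rw [hfun]]
    have hmeas : AEStronglyMeasurable (fun x => (10:ℝ) ^ x * (G x).toReal)
        (volume.restrict (Set.Ioc a b)) :=
      ((hrpow_meas.aemeasurable.mul hGm.ennreal_toReal).aestronglyMeasurable).restrict
    rw [integral_eq_lintegral_of_nonneg_ae (ae_of_all _ fun x =>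
      mul_nonneg (Real.rpow_nonneg (by norm_num) x) ENNReal.toReal_nonneg) hmeas]
    congr 1
    rw [← Measure.restrict_congr_set Ico_ae_eq_Ioc]
    refine lintegral_congr_ae ?_
    filter_upwards [hfinIco] with x hx
    rw [ENNReal.ofReal_mul (Real.rpow_nonneg (by norm_num) x),
      ENNReal.ofReal_toReal hx.ne, mul_comm]
  rw [hLHS]
  exact hRHS.symm
end

section
/- Let Y be a random variable taking values in the positive reals such that X = log₁₀ Y has probability density function g : ℝ → ℝ, and suppose g†(x) = Σ_{k ∈ ℤ} g(x + k) equals 1 for almost every x ∈ [0,1) (equivalently, the fractional part of log₁₀ Y is uniformly distributed on [0,1), i.e., Y is Benford). Then for every n ≥ 1 and all digits d₁ ∈ {1,…,9}, d₂,…,dₙ ∈ {0,…,9}, E[S_{d₁⋯dₙ} Y] = 10^{1−n}/ln 10. In particular, this expectation does not depend on the digit tuple (sum invariance). -/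
open MeasureTheory Real

lemma benford_geo_aux (n : ℕ) : 9 * ∑ j ∈ Finset.range n, 10 ^ j + 1 = 10 ^ n := by
  induction n with
  | zero => simp
  | succ m ih =>
      rw [Finset.sum_range_succ, Nat.mul_add, pow_succ]
      omega

lemma benford_digitVal_lb (n : ℕ) (hn : 1 ≤ n) (d : Fin n → ℕ) (hd : IsDigitTuple n d) :
    10 ^ (n - 1) ≤ digitVal n d := by
  have h0 : (0 : ℕ) < n := hn
  calc 10 ^ (n-1) = 1 * 10 ^ (n - 1 - ((⟨0, h0⟩ : Fin n) : ℕ)) := by simp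
    _ ≤ d ⟨0, h0⟩ * 10 ^ (n - 1 - ((⟨0, h0⟩ : Fin n) : ℕ)) :=
        Nat.mul_le_mul_right _ (hd.2 _ rfl)
    _ ≤ digitVal n d :=
        Finset.single_le_sum (f := fun i : Fin n => d i * 10 ^ (n - 1 - (i : ℕ)))
          (fun i _ => Nat.zero_le _) (Finset.mem_univ _)

lemma benford_digitVal_ub (n : ℕ) (d : Fin n → ℕ) (hd : IsDigitTuple n d) :
    digitVal n d + 1 ≤ 10 ^ n := by
  have h : digitVal n d ≤ ∑ i : Fin n, 9 * 10 ^ (n - 1 - (i : ℕ)) :=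
    Finset.sum_le_sum fun i _ => Nat.mul_le_mul_right _ (hd.1 i)
  have h2 : ∑ i : Fin n, 9 * 10 ^ (n - 1 - (i : ℕ)) = 9 * ∑ j ∈ Finset.range n, 10 ^ j := by
    rw [Fin.sum_univ_eq_sum_range (fun i => 9 * 10 ^ (n - 1 - i)), ← Finset.mul_sum,
      Finset.sum_range_reflect (fun j => 10 ^ j)]
  have := benford_geo_aux n
  omega

lemma benford_mem_iff (n : ℕ) (hn : 1 ≤ n) (d : Fin n → ℕ) (hd : IsDigitTuple n d) (u : ℝ) :
    (⌊(10 : ℝ) ^ (n - 1) * (10 : ℝ) ^ (u : ℝ)⌋ = (digitVal n d : ℤ)) ↔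
      (Real.logb 10 (digitVal n d) - ((n - 1 : ℕ) : ℝ) ≤ u ∧
        u < Real.logb 10 ((digitVal n d : ℝ) + 1) - ((n - 1 : ℕ) : ℝ)) := by
  have hb : (1 : ℝ) < 10 := by norm_num
  have hxn : 1 ≤ digitVal n d :=
    le_trans (Nat.one_le_pow _ _ (by norm_num)) (benford_digitVal_lb n hn d hd)
  have hx : (0 : ℝ) < (digitVal n d : ℝ) := by exact_mod_cast hxn
  have hx1 : (0 : ℝ) < (digitVal n d : ℝ) + 1 := by linarith
  have key : (10 : ℝ) ^ (n - 1) * (10 : ℝ) ^ (u : ℝ)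
      = (10 : ℝ) ^ (((n - 1 : ℕ) : ℝ) + u) := by
    rw [Real.rpow_add (by norm_num), Real.rpow_natCast]
  rw [key, Int.floor_eq_iff]
  push_cast
  constructor
  · rintro ⟨h1, h2⟩
    refine ⟨by have := (Real.logb_le_iff_le_rpow hb hx).2 h1; linarith, ?_⟩
    have := (Real.lt_logb_iff_rpow_lt hb hx1).2 h2
    linarith
  · rintro ⟨h1, h2⟩
    refine ⟨(Real.logb_le_iff_le_rpow hb hx).1 (by linarith), ?_⟩
    exact (Real.lt_logb_iff_rpow_lt hb hx1).1 (by linarith)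

/-- The digit event on the log scale and the significand, as a function of `x = log₁₀ y`. -/
noncomputable def benfordF (n : ℕ) (d : Fin n → ℕ) : ℝ → ℝ :=
  Set.indicator {x : ℝ | ⌊(10 : ℝ) ^ (n - 1) * (10 : ℝ) ^ (Int.fract x)⌋ = (digitVal n d : ℤ)}
    (fun x => (10 : ℝ) ^ (Int.fract x))

lemma benfordF_rpow_eq : (fun x : ℝ => (10 : ℝ) ^ (Int.fract x))
    = fun x => Real.exp (Real.log 10 * Int.fract x) :=
  funext fun _ => Real.rpow_def_of_pos (by norm_num) _

lemma benfordF_meas_set (n : ℕ) (d : Fin n → ℕ) :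
    MeasurableSet {x : ℝ | ⌊(10 : ℝ) ^ (n - 1) * (10 : ℝ) ^ (Int.fract x)⌋ = (digitVal n d : ℤ)} := by
  have hf : Measurable (fun x : ℝ => (10 : ℝ) ^ (Int.fract x)) := by
    rw [benfordF_rpow_eq]; exact (measurable_const.mul measurable_fract).exp
  exact (Int.measurable_floor.comp (measurable_const.mul hf)) (measurableSet_singleton _)

lemma benfordF_measurable (n : ℕ) (d : Fin n → ℕ) : Measurable (benfordF n d) := by
  have hf : Measurable (fun x : ℝ => (10 : ℝ) ^ (Int.fract x)) := by
    rw [benfordF_rpow_eq]; exact (measurable_const.mul measurable_fract).exp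
  exact hf.indicator (benfordF_meas_set n d)

lemma benfordF_nonneg (n : ℕ) (d : Fin n → ℕ) (x : ℝ) : 0 ≤ benfordF n d x :=
  Set.indicator_nonneg (fun y _ => Real.rpow_nonneg (by norm_num) _) x

lemma benfordF_periodic (n : ℕ) (d : Fin n → ℕ) (x : ℝ) (k : ℤ) :
    benfordF n d (x + k) = benfordF n d x := by
  simp only [benfordF, Set.indicator_apply, Set.mem_setOf_eq, Int.fract_add_intCast]

lemma benfordF_signif (n : ℕ) (d : Fin n → ℕ) (y : ℝ) (h : HasFirstDigits n d y) :
    benfordF n d (Real.logb 10 y) = signif y := by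
  have hfr : Int.fract (Real.logb 10 y) = Real.logb 10 y - (⌊Real.logb 10 y⌋ : ℝ) := rfl
  have hsig : signif y = (10 : ℝ) ^ (Int.fract (Real.logb 10 y)) := by rw [signif, hfr]
  rw [benfordF, Set.indicator_of_mem, hsig]
  · show ⌊_⌋ = _
    rw [← hsig]; exact h

lemma benfordF_not_mem (n : ℕ) (d : Fin n → ℕ) (y : ℝ) (h : ¬ HasFirstDigits n d y) :
    benfordF n d (Real.logb 10 y) = 0 := by
  have hfr : Int.fract (Real.logb 10 y) = Real.logb 10 y - (⌊Real.logb 10 y⌋ : ℝ) := rfl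
  have hsig : signif y = (10 : ℝ) ^ (Int.fract (Real.logb 10 y)) := by rw [signif, hfr]
  rw [benfordF, Set.indicator_of_notMem]
  intro hc
  exact h (by rw [HasFirstDigits, hsig]; exact hc)

open ENNReal in
lemma benford_key (n : ℕ) (hn : 1 ≤ n) (d : Fin n → ℕ) (hd : IsDigitTuple n d)
    (g : ℝ → ℝ) (hg0 : ∀ x, 0 ≤ g x) (hgInt : Integrable g)
    (hwrap : ∀ᵐ x ∂(volume.restrict (Set.Ico (0 : ℝ) 1)),
      (∑' k : ℤ, g (x + (k : ℝ))) = 1) :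
    ∫⁻ x, ENNReal.ofReal (g x) * ENNReal.ofReal (benfordF n d x)
      = ENNReal.ofReal ((10 : ℝ) ^ ((1 : ℤ) - (n : ℤ)) / Real.log 10) := by
  have hb : (1 : ℝ) < 10 := by norm_num
  have hxn : 1 ≤ digitVal n d :=
    le_trans (Nat.one_le_pow _ _ (by norm_num)) (benford_digitVal_lb n hn d hd)
  have hx : (0 : ℝ) < (digitVal n d : ℝ) := by exact_mod_cast hxn
  have hx1 : (0 : ℝ) < (digitVal n d : ℝ) + 1 := by linarith
  set m : ℝ := ((n - 1 : ℕ) : ℝ) with hm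
  set a : ℝ := Real.logb 10 (digitVal n d) - m with ha
  set b : ℝ := Real.logb 10 ((digitVal n d : ℝ) + 1) - m with hbdef
  have hFmeas := benfordF_measurable n d
  -- Step 1: unfold over integer translates
  have htrans : ∀ k : ℤ,
      ∫⁻ x in Set.Ico (k : ℝ) ((k : ℝ) + 1),
          ENNReal.ofReal (g x) * ENNReal.ofReal (benfordF n d x)
        = ∫⁻ u in Set.Ico (0 : ℝ) 1,
            ENNReal.ofReal (g (u + (k : ℝ))) * ENNReal.ofReal (benfordF n d u) := by
    intro k
    have mp := measurePreserving_add_right (volume : Measure ℝ) (k : ℝ)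
    have hpre : (fun x : ℝ => x + (k : ℝ)) ⁻¹' Set.Ico (k : ℝ) ((k : ℝ) + 1)
        = Set.Ico (0 : ℝ) 1 := by
      rw [Set.preimage_add_const_Ico]; norm_num
    have h := mp.setLIntegral_comp_preimage_emb (measurableEmbedding_addRight (k : ℝ))
      (fun x => ENNReal.ofReal (g x) * ENNReal.ofReal (benfordF n d x))
      (Set.Ico (k : ℝ) ((k : ℝ) + 1))
    rw [hpre] at h
    rw [← h]
    refine lintegral_congr fun u => ?_
    rw [benfordF_periodic n d u k]
  have hsum_meas : ∀ k : ℤ, AEMeasurable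
      (fun u : ℝ => ENNReal.ofReal (g (u + (k : ℝ))) * ENNReal.ofReal (benfordF n d u))
      (volume.restrict (Set.Ico (0 : ℝ) 1)) := by
    intro k
    exact (((hgInt.aemeasurable.comp_quasiMeasurePreserving
        (measurePreserving_add_right volume (k : ℝ)).quasiMeasurePreserving).ennreal_ofReal).mono_measure
        Measure.restrict_le_self).mul (hFmeas.ennreal_ofReal.aemeasurable)
  have h5 : ∫⁻ x, ENNReal.ofReal (g x) * ENNReal.ofReal (benfordF n d x)
      = ∫⁻ u in Set.Ico (0 : ℝ) 1,
          ∑' k : ℤ, ENNReal.ofReal (g (u + (k : ℝ))) * ENNReal.ofReal (benfordF n d u) := by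
    calc ∫⁻ x, ENNReal.ofReal (g x) * ENNReal.ofReal (benfordF n d x)
        = ∫⁻ x in Set.univ, ENNReal.ofReal (g x) * ENNReal.ofReal (benfordF n d x) :=
          (setLIntegral_univ _).symm
      _ = ∫⁻ x in ⋃ k : ℤ, Set.Ico (k : ℝ) ((k : ℝ) + 1),
            ENNReal.ofReal (g x) * ENNReal.ofReal (benfordF n d x) := by
          rw [iUnion_Ico_intCast ℝ]
      _ = ∑' k : ℤ, ∫⁻ x in Set.Ico (k : ℝ) ((k : ℝ) + 1),
            ENNReal.ofReal (g x) * ENNReal.ofReal (benfordF n d x) :=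
          lintegral_iUnion (fun _ => measurableSet_Ico) (Set.pairwise_disjoint_Ico_intCast ℝ) _
      _ = ∑' k : ℤ, ∫⁻ u in Set.Ico (0 : ℝ) 1,
            ENNReal.ofReal (g (u + (k : ℝ))) * ENNReal.ofReal (benfordF n d u) :=
          tsum_congr htrans
      _ = _ := (lintegral_tsum hsum_meas).symm
  -- Step 2: use the wrapping hypothesis
  have h7 : ∫⁻ u in Set.Ico (0 : ℝ) 1,
        ∑' k : ℤ, ENNReal.ofReal (g (u + (k : ℝ))) * ENNReal.ofReal (benfordF n d u)
      = ∫⁻ u in Set.Ico (0 : ℝ) 1, ENNReal.ofReal (benfordF n d u) := by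
    refine lintegral_congr_ae ?_
    filter_upwards [hwrap] with u hu
    have hsumm : Summable fun k : ℤ => g (u + (k : ℝ)) := by
      by_contra hns
      rw [tsum_eq_zero_of_not_summable hns] at hu; norm_num at hu
    rw [ENNReal.tsum_mul_right, ← ENNReal.ofReal_tsum_of_nonneg (fun k => hg0 _) hsumm, hu,
      ENNReal.ofReal_one, one_mul]
  -- Step 3: identify the indicator on [0,1)
  have hsub : Set.Ico a b ⊆ Set.Ico (0 : ℝ) 1 := by
    have ha0 : 0 ≤ a := by
      rw [ha, sub_nonneg, Real.le_logb_iff_rpow_le hb hx, hm, Real.rpow_natCast]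
      exact_mod_cast benford_digitVal_lb n hn d hd
    have hb1 : b ≤ 1 := by
      rw [hbdef, sub_le_iff_le_add, Real.logb_le_iff_le_rpow hb hx1]
      have hmn : 1 + m = (n : ℝ) := by
        rw [hm]; rw [Nat.cast_sub hn]; push_cast; ring
      rw [hmn, Real.rpow_natCast]
      exact_mod_cast benford_digitVal_ub n d hd
    exact fun u hu => ⟨le_trans ha0 hu.1, lt_of_lt_of_le hu.2 hb1⟩
  have h8 : ∫⁻ u in Set.Ico (0 : ℝ) 1, ENNReal.ofReal (benfordF n d u)
      = ∫⁻ u in Set.Ico a b, ENNReal.ofReal ((10 : ℝ) ^ (u : ℝ)) := by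
    have heq : ∀ u ∈ Set.Ico (0 : ℝ) 1, ENNReal.ofReal (benfordF n d u)
        = Set.indicator (Set.Ico a b) (fun u => ENNReal.ofReal ((10 : ℝ) ^ (u : ℝ))) u := by
      intro u hu
      have hfr : Int.fract u = u := Int.fract_eq_self.2 ⟨hu.1, hu.2⟩
      have hiff : u ∈ {x : ℝ | ⌊(10 : ℝ) ^ (n - 1) * (10 : ℝ) ^ (Int.fract x)⌋
          = (digitVal n d : ℤ)} ↔ u ∈ Set.Ico a b := by
        rw [Set.mem_setOf_eq, hfr, Set.mem_Ico]
        exact benford_mem_iff n hn d hd u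
      by_cases hmem : u ∈ Set.Ico a b
      · rw [Set.indicator_of_mem hmem, benfordF, Set.indicator_of_mem (hiff.2 hmem), hfr]
      · rw [Set.indicator_of_notMem hmem, benfordF,
          Set.indicator_of_notMem (fun hc => hmem (hiff.1 hc)), ENNReal.ofReal_zero]
    rw [setLIntegral_congr_fun measurableSet_Ico heq,
      lintegral_indicator measurableSet_Ico, Measure.restrict_restrict measurableSet_Ico,
      Set.inter_eq_self_of_subset_left hsub]
  -- Step 4: compute the integral
  have hab : a ≤ b := by
    have := Real.logb_le_logb_of_le hb hx (by linarith : (digitVal n d : ℝ) ≤ (digitVal n d : ℝ) + 1)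
    rw [ha, hbdef]; linarith
  have hlogpos : 0 < Real.log 10 := Real.log_pos (by norm_num)
  have hEeq : ∀ u : ℝ, (10 : ℝ) ^ (u : ℝ) = Real.exp (Real.log 10 * u) :=
    fun u => Real.rpow_def_of_pos (by norm_num) u
  have hInt : IntegrableOn (fun u : ℝ => Real.exp (Real.log 10 * u)) (Set.Ico a b) volume :=
    ((Real.continuous_exp.comp (continuous_const.mul continuous_id)).integrableOn_Icc).mono_set
      Set.Ico_subset_Icc_self
  have h9 : ∫⁻ u in Set.Ico a b, ENNReal.ofReal ((10 : ℝ) ^ (u : ℝ))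
      = ENNReal.ofReal (∫ u in Set.Ico a b, Real.exp (Real.log 10 * u)) := by
    simp_rw [hEeq]
    exact (ofReal_integral_eq_lintegral_ofReal hInt
      (ae_of_all _ fun u => (Real.exp_pos _).le)).symm
  have h10 : ∫ u in Set.Ico a b, Real.exp (Real.log 10 * u)
      = ((10 : ℝ) ^ (b : ℝ) - (10 : ℝ) ^ (a : ℝ)) / Real.log 10 := by
    rw [setIntegral_congr_set Ico_ae_eq_Ioc, ← intervalIntegral.integral_of_le hab,
      intervalIntegral.integral_comp_mul_left Real.exp hlogpos.ne', integral_exp,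
      ← hEeq a, ← hEeq b, smul_eq_mul]
    ring
  have h11 : (10 : ℝ) ^ (b : ℝ) - (10 : ℝ) ^ (a : ℝ) = (10 : ℝ) ^ ((1 : ℤ) - (n : ℤ)) := by
    have hmne : (10 : ℝ) ^ (m : ℝ) ≠ 0 := (Real.rpow_pos_of_pos (by norm_num) m).ne'
    rw [hbdef, ha, Real.rpow_sub (by norm_num), Real.rpow_sub (by norm_num),
      Real.rpow_logb (by norm_num) (by norm_num) hx1,
      Real.rpow_logb (by norm_num) (by norm_num) hx, div_sub_div_same]
    have hz : (10 : ℝ) ^ ((1 : ℤ) - (n : ℤ)) = ((10 : ℝ) ^ (m : ℝ))⁻¹ := by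
      rw [hm, Real.rpow_natCast, show ((1 : ℤ) - (n : ℤ)) = -((n - 1 : ℕ) : ℤ) by omega,
        zpow_neg, zpow_natCast]
    rw [hz]
    field_simp
    ring
  rw [h5, h7, h8, h9, h10, h11]

/-- **Sum invariance of Benford variables.**
If `X = log₁₀ Y` has probability density `g` whose wrapping
`g†(x) = Σ_{k ∈ ℤ} g(x + k)` equals `1` for a.e. `x ∈ [0,1)` (i.e. `Y` is
Benford), then for every `n ≥ 1` and every digit tuple `d₁, …, dₙ`,
`E[S_{d₁⋯dₙ} Y] = 10^(1−n) / ln 10`, independently of the digit tuple. -/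
theorem expSignifSum_of_benford {Ω : Type*} [MeasurableSpace Ω]
    (P : Measure Ω) [IsProbabilityMeasure P] (Y : Ω → ℝ) (hY : Measurable Y)
    (hYpos : ∀ ω, 0 < Y ω) (g : ℝ → ℝ) (hg0 : ∀ x, 0 ≤ g x) (hgInt : Integrable g)
    (hgpdf : P.map (fun ω => Real.logb 10 (Y ω))
      = volume.withDensity (fun x => ENNReal.ofReal (g x)))
    (hwrap : ∀ᵐ x ∂(volume.restrict (Set.Ico (0 : ℝ) 1)),
      (∑' k : ℤ, g (x + (k : ℝ))) = 1)
    (n : ℕ) (hn : 1 ≤ n) (d : Fin n → ℕ) (hd : IsDigitTuple n d) :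
    expSignifSum P Y n d = (10 : ℝ) ^ ((1 : ℤ) - (n : ℤ)) / Real.log 10 := by
  have hX : Measurable fun ω => Real.logb 10 (Y ω) := by
    simp only [Real.logb]
    exact (Real.measurable_log.comp hY).div_const _
  have hFmeas := benfordF_measurable n d
  have h1 : expSignifSum P Y n d = ∫ ω, benfordF n d (Real.logb 10 (Y ω)) ∂P := by
    unfold expSignifSum
    refine integral_congr_ae (Filter.Eventually.of_forall fun ω => ?_)
    by_cases h : HasFirstDigits n d (Y ω)
    · have hm : ω ∈ {ω | HasFirstDigits n d (Y ω)} := h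
      rw [Set.indicator_of_mem hm]
      exact (benfordF_signif n d _ h).symm
    · have hm : ω ∉ {ω | HasFirstDigits n d (Y ω)} := h
      rw [Set.indicator_of_notMem hm]
      exact (benfordF_not_mem n d _ h).symm
  have hnn : 0 ≤ᵐ[P] fun ω => benfordF n d (Real.logb 10 (Y ω)) :=
    ae_of_all _ fun ω => benfordF_nonneg n d _
  have h2 : ∫ ω, benfordF n d (Real.logb 10 (Y ω)) ∂P
      = (∫⁻ ω, ENNReal.ofReal (benfordF n d (Real.logb 10 (Y ω))) ∂P).toReal :=
    integral_eq_lintegral_of_nonneg_ae hnn ((hFmeas.comp hX).aestronglyMeasurable)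
  have h3 : ∫⁻ ω, ENNReal.ofReal (benfordF n d (Real.logb 10 (Y ω))) ∂P
      = ∫⁻ x, ENNReal.ofReal (benfordF n d x) ∂(P.map fun ω => Real.logb 10 (Y ω)) :=
    (lintegral_map hFmeas.ennreal_ofReal hX).symm
  have h4 : ∫⁻ x, ENNReal.ofReal (benfordF n d x)
        ∂(volume.withDensity fun x => ENNReal.ofReal (g x))
      = ∫⁻ x, ENNReal.ofReal (g x) * ENNReal.ofReal (benfordF n d x) := by
    rw [lintegral_withDensity_eq_lintegral_mul₀ hgInt.aemeasurable.ennreal_ofReal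
      hFmeas.ennreal_ofReal.aemeasurable]
    simp only [Pi.mul_apply]
  have hval : 0 ≤ (10 : ℝ) ^ ((1 : ℤ) - (n : ℤ)) / Real.log 10 :=
    div_nonneg (zpow_nonneg (by norm_num) _) (Real.log_nonneg (by norm_num))
  rw [h1, h2, h3, hgpdf, h4, benford_key n hn d hd g hg0 hgInt hwrap,
    ENNReal.toReal_ofReal hval]
end

section
/- Let Y be an n-digit Benford random variable taking values in the positive reals such that X = log₁₀ Y has probability density function g, and let g†(x) = Σ_{k ∈ ℤ} g(x + k) for x ∈ [0,1). Then for all digits d₁ ∈ {1,…,9}, d₂,…,dₙ ∈ {0,…,9} with xₙ = 10^{n−1}d₁ + ⋯ + dₙ, the integral of g† from 0 to log₁₀(xₙ/10^{n−1}) equals log₁₀(xₙ/10^{n−1}). -/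
open MeasureTheory Real

open Finset

lemma sum_digits (n m : ℕ) : ∑ j ∈ Finset.range n, (m / 10^j % 10) * 10^j = m % 10^n := by
  induction n with
  | zero => simp [Nat.mod_one]
  | succ n ih =>
    rw [Finset.sum_range_succ, ih]
    have key : m % 10^(n+1) = m % 10^n + (m / 10^n % 10) * 10^n := by
      set a := 10^n with ha
      have hA : (0:ℕ) < a := Nat.pow_pos (by norm_num)
      have h1 : m = 10*a*(m/a/10) + ((m/a % 10) * a + m % a) := by
        have := Nat.div_add_mod m a
        have := Nat.div_add_mod (m/a) 10
        nlinarith [Nat.div_add_mod m a, Nat.div_add_mod (m/a) 10]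
      have h2 : (m/a % 10) * a + m % a < 10*a := by
        have := Nat.mod_lt (m/a) (show 0 < 10 by norm_num)
        have := Nat.mod_lt m hA
        nlinarith [Nat.mod_lt m hA, Nat.mod_lt (m/a) (show 0 < 10 by norm_num)]
      have : m % (10*a) = (m/a % 10) * a + m % a := by
        conv_lhs => rw [h1]
        rw [Nat.mul_add_mod, Nat.mod_eq_of_lt h2]
      rw [pow_succ, Nat.mul_comm (10^n) 10, this]
      ring
    omega

/-- the digit tuple of `m` -/
def digitsOf (n m : ℕ) : Fin n → ℕ := fun i => m / 10^(n-1-(i:ℕ)) % 10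

lemma digitVal_digitsOf (n m : ℕ) (hm : m < 10^n) : digitVal n (digitsOf n m) = m := by
  unfold digitVal digitsOf
  rw [Fin.sum_univ_eq_sum_range (fun i => m / 10^(n-1-i) % 10 * 10^(n-1-i))]
  rw [Finset.sum_range_reflect (fun j => m / 10^j % 10 * 10^j) n]
  rw [sum_digits, Nat.mod_eq_of_lt hm]

lemma isDigitTuple_digitsOf (n m : ℕ) (hn : 1 ≤ n) (h1 : 10^(n-1) ≤ m) (h2 : m < 10^n) :
    IsDigitTuple n (digitsOf n m) := by
  constructor
  · intro i; exact Nat.le_of_lt_succ (Nat.mod_lt _ (by norm_num))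
  · intro i hi
    unfold digitsOf
    rw [hi]
    simp only [Nat.sub_zero]
    have hq1 : 1 ≤ m / 10^(n-1) := (Nat.one_le_div_iff (Nat.pow_pos (by norm_num))).2 h1
    have hq2 : m / 10^(n-1) < 10 := by
      rw [Nat.div_lt_iff_lt_mul (Nat.pow_pos (by norm_num))]
      calc m < 10^n := h2
        _ = 10 * 10^(n-1) := by rw [← pow_succ']; congr 1; omega
    rw [Nat.mod_eq_of_lt hq2]; exact hq1

lemma digitVal_bounds (n : ℕ) (hn : 1 ≤ n) (d : Fin n → ℕ) (hd : IsDigitTuple n d) :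
    10^(n-1) ≤ digitVal n d ∧ digitVal n d < 10^n := by
  obtain ⟨h9, h1⟩ := hd
  constructor
  · calc 10^(n-1) = 1 * 10^(n-1-((⟨0, by omega⟩ : Fin n) : ℕ)) := by simp
    _ ≤ d ⟨0, by omega⟩ * 10^(n-1-((⟨0, by omega⟩ : Fin n) : ℕ)) := by
        exact Nat.mul_le_mul_right _ (h1 _ rfl)
    _ ≤ digitVal n d := Finset.single_le_sum (f := fun i : Fin n => d i * 10^(n-1-(i:ℕ)))
        (fun i _ => Nat.zero_le _) (Finset.mem_univ _)
  · have : digitVal n d ≤ ∑ i : Fin n, 9 * 10^(n-1-(i:ℕ)) :=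
      Finset.sum_le_sum (fun i _ => Nat.mul_le_mul_right _ (h9 i))
    have h2 : ∑ i : Fin n, 9 * 10^(n-1-(i:ℕ)) = 10^n - 1 := by
      rw [Fin.sum_univ_eq_sum_range (fun i => 9 * 10^(n-1-i))]
      rw [Finset.sum_range_reflect (fun j => 9 * 10^j) n]
      have aux : ∀ k : ℕ, ∑ j ∈ Finset.range k, 9 * 10^j = 10^k - 1 := by
        intro k
        induction k with
        | zero => simp
        | succ k ih =>
          rw [Finset.sum_range_succ, ih, pow_succ]
          have : 0 < 10^k := Nat.pow_pos (by norm_num)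
          omega
      exact aux n
    have : 0 < 10^n := Nat.pow_pos (by norm_num)
    omega

section Wrapped
variable (g : ℝ → ℝ)

lemma fract_set_eq (a b : ℝ) (ha : 0 ≤ a) (hb : b ≤ 1) :
    {x : ℝ | Int.fract x ∈ Set.Ico a b} = ⋃ k : ℤ, Set.Ico (a + k) (b + k) := by
  ext x
  simp only [Set.mem_setOf_eq, Set.mem_Ico, Set.mem_iUnion]
  constructor
  · rintro ⟨h1, h2⟩
    refine ⟨⌊x⌋, ?_, ?_⟩
    · have := Int.self_sub_floor x; unfold Int.fract at *; linarith
    · unfold Int.fract at *; linarith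
  · rintro ⟨k, h1, h2⟩
    have hfloor : ⌊x⌋ = k := by
      rw [Int.floor_eq_iff]
      constructor
      · linarith
      · push_cast; linarith
    rw [Int.fract]
    rw [hfloor]
    constructor <;> push_cast <;> linarith

lemma Ico_trans_disjoint (a b : ℝ) (ha : 0 ≤ a) (hb : b ≤ 1) :
    Pairwise (Function.onFun Disjoint (fun k : ℤ => Set.Ico (a + k) (b + k))) := by
  intro k l hkl
  have : (Set.Ico (a + (k:ℝ)) (b + k)) ⊆ Set.Ico (k:ℝ) (k+1) := by
    apply Set.Ico_subset_Ico <;> linarith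
  have h2 : (Set.Ico (a + (l:ℝ)) (b + l)) ⊆ Set.Ico (l:ℝ) (l+1) := by
    apply Set.Ico_subset_Ico <;> linarith
  refine Set.disjoint_of_subset this h2 ?_
  rw [Set.Ico_disjoint_Ico]
  rcases hkl.lt_or_gt with h | h
  · have hkl' : (k:ℝ) + 1 ≤ l := by exact_mod_cast Int.add_one_le_of_lt h
    exact inf_le_left.trans (hkl'.trans le_sup_right)
  · have hkl' : (l:ℝ) + 1 ≤ k := by exact_mod_cast Int.add_one_le_of_lt h
    exact inf_le_right.trans (hkl'.trans le_sup_left)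

lemma Ioc_trans_disjoint (a b : ℝ) (ha : 0 ≤ a) (hb : b ≤ 1) :
    Pairwise (Function.onFun Disjoint (fun k : ℤ => Set.Ioc (a + k) (b + k))) := by
  intro k l hkl
  have h1 : (Set.Ioc (a + (k:ℝ)) (b + k)) ⊆ Set.Ioc (k:ℝ) (k+1) := by
    apply Set.Ioc_subset_Ioc <;> linarith
  have h2 : (Set.Ioc (a + (l:ℝ)) (b + l)) ⊆ Set.Ioc (l:ℝ) (l+1) := by
    apply Set.Ioc_subset_Ioc <;> linarith
  refine Set.disjoint_of_subset h1 h2 ?_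
  rw [Set.Ioc_disjoint_Ioc]
  rcases hkl.lt_or_gt with h | h
  · have hkl' : (k:ℝ) + 1 ≤ l := by exact_mod_cast Int.add_one_le_of_lt h
    exact inf_le_left.trans (hkl'.trans le_sup_right)
  · have hkl' : (l:ℝ) + 1 ≤ k := by exact_mod_cast Int.add_one_le_of_lt h
    exact inf_le_right.trans (hkl'.trans le_sup_left)

lemma lint_translate (h : ℝ → ENNReal) (a b k : ℝ) :
    ∫⁻ x in Set.Ioc a b, h (x + k) = ∫⁻ x in Set.Ioc (a + k) (b + k), h x := by
  rw [← lintegral_indicator measurableSet_Ioc, ← lintegral_indicator measurableSet_Ioc]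
  rw [← lintegral_add_right_eq_self (fun x => (Set.Ioc (a+k) (b+k)).indicator h x) k]
  congr 1
  ext x
  by_cases hx : x ∈ Set.Ioc a b
  · have hx' : x + k ∈ Set.Ioc (a + k) (b + k) := by
      simp only [Set.mem_Ioc] at hx ⊢; constructor <;> linarith [hx.1, hx.2]
    rw [Set.indicator_of_mem hx' h, Set.indicator_of_mem hx]
  · have hx' : x + k ∉ Set.Ioc (a + k) (b + k) := by
      simp only [Set.mem_Ioc] at hx ⊢
      exact fun hc => hx ⟨by linarith [hc.1], by linarith [hc.2]⟩
    rw [Set.indicator_of_notMem hx' h, Set.indicator_of_notMem hx]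

/-- Core analytic lemma: the wrapped integral equals the withDensity measure of the
fractional-part event. -/
lemma wrapped_eq (hg0 : ∀ x, 0 ≤ g x) (hgm : Measurable g) (hgInt : Integrable g)
    (a b : ℝ) (ha : 0 ≤ a) (hab : a ≤ b) (hb : b ≤ 1) :
    ENNReal.ofReal (∫ x in a..b, ∑' k : ℤ, g (x + (k : ℝ)))
      = ∫⁻ x in {x : ℝ | Int.fract x ∈ Set.Ico a b}, ENNReal.ofReal (g x) := by
  -- ennreal-valued translate integrals
  set F : ℤ → ENNReal := fun k => ∫⁻ x in Set.Ioc a b, ENNReal.ofReal (g (x + k)) with hF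
  set r : ℤ → ℝ := fun k => ∫ x in Set.Ioc a b, g (x + (k:ℝ)) with hr
  have hr0 : ∀ k, 0 ≤ r k := fun k =>
    setIntegral_nonneg measurableSet_Ioc (fun x _ => hg0 _)
  have hIntk : ∀ k : ℤ, Integrable (fun x => g (x + (k:ℝ))) := fun k =>
    hgInt.comp_add_right _
  have hFr : ∀ k, ENNReal.ofReal (r k) = F k := by
    intro k
    exact ofReal_integral_eq_lintegral_ofReal ((hIntk k).integrableOn)
      (Filter.Eventually.of_forall fun x => hg0 _)
  -- total mass of F is finite
  have hFsum : ∑' k : ℤ, F k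
      = ∫⁻ x in ⋃ k : ℤ, Set.Ioc (a + (k:ℝ)) (b + k), ENNReal.ofReal (g x) := by
    rw [lintegral_iUnion (fun k => measurableSet_Ioc) (Ioc_trans_disjoint a b ha hb)]
    exact tsum_congr fun k => lint_translate (fun x => ENNReal.ofReal (g x)) a b k
  have hFne : ∑' k : ℤ, F k ≠ ⊤ := by
    rw [hFsum]
    refine ne_top_of_le_ne_top ?_ (setLIntegral_le_lintegral _ _)
    rw [← ofReal_integral_eq_lintegral_ofReal hgInt (Filter.Eventually.of_forall hg0)]
    exact ENNReal.ofReal_ne_top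
  have hrsum : Summable r := by
    have := ENNReal.summable_toReal hFne
    refine this.congr fun k => ?_
    rw [← hFr k, ENNReal.toReal_ofReal (hr0 k)]
  -- interchange sum and integral
  have hinter : (∫ x in a..b, ∑' k : ℤ, g (x + (k : ℝ))) = ∑' k : ℤ, r k := by
    rw [intervalIntegral.integral_of_le hab]
    refine integral_tsum (fun k => ?_) ?_
    · exact ((hgm.comp (measurable_add_const (k:ℝ))).aestronglyMeasurable).restrict
    · have : ∀ k : ℤ, (∫⁻ x in Set.Ioc a b, ‖g (x + (k:ℝ))‖ₑ) = F k := by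
        intro k
        refine lintegral_congr fun x => ?_
        exact Real.enorm_eq_ofReal (hg0 _)
      rw [tsum_congr this]
      exact hFne
  rw [hinter, ENNReal.ofReal_tsum_of_nonneg hr0 hrsum, tsum_congr hFr,
    fract_set_eq a b ha hb,
    lintegral_iUnion (fun k => measurableSet_Ico) (Ico_trans_disjoint a b ha hb)]
  refine tsum_congr fun k => ?_
  calc F k = ∫⁻ x in Set.Ioc (a + (k:ℝ)) (b + k), ENNReal.ofReal (g x) :=
        lint_translate (fun x => ENNReal.ofReal (g x)) a b k
    _ = ∫⁻ x in Set.Ico (a + (k:ℝ)) (b + k), ENNReal.ofReal (g x) :=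
        (setLIntegral_congr Ico_ae_eq_Ioc).symm

end Wrapped
lemma event_iff (n : ℕ) (hn : 1 ≤ n) (m : ℕ) (hm : 10^(n-1) ≤ m) (y : ℝ) :
    (⌊(10:ℝ)^(n-1) * signif y⌋ = (m:ℤ)) ↔
      Int.fract (Real.logb 10 y) ∈
        Set.Ico (Real.logb 10 ((m:ℝ)/(10:ℝ)^(n-1)))
          (Real.logb 10 (((m:ℝ)+1)/(10:ℝ)^(n-1))) := by
  have hN : (0:ℝ) < (10:ℝ)^(n-1) := by positivity
  have hmcast : (10:ℝ)^(n-1) ≤ (m:ℝ) := by exact_mod_cast Nat.cast_le.2 hm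
  have hmpos : (0:ℝ) < (m:ℝ) := lt_of_lt_of_le hN hmcast
  set f := Int.fract (Real.logb 10 y) with hf
  have hsig : signif y = (10:ℝ) ^ f := by
    rw [signif, hf, ← Int.self_sub_floor]
  have key1 : ((m:ℝ) ≤ (10:ℝ)^(n-1) * (10:ℝ)^f) ↔ Real.logb 10 ((m:ℝ)/(10:ℝ)^(n-1)) ≤ f := by
    rw [mul_comm, ← div_le_iff₀ hN]
    conv_lhs => rw [show (m:ℝ)/(10:ℝ)^(n-1) = (10:ℝ)^(Real.logb 10 ((m:ℝ)/(10:ℝ)^(n-1)))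
      from (Real.rpow_logb (by norm_num) (by norm_num) (by positivity)).symm]
    exact Real.rpow_le_rpow_left_iff (by norm_num)
  have key2 : ((10:ℝ)^(n-1) * (10:ℝ)^f < (m:ℝ)+1) ↔ f < Real.logb 10 (((m:ℝ)+1)/(10:ℝ)^(n-1)) := by
    rw [mul_comm, ← lt_div_iff₀ hN]
    conv_lhs => rw [show ((m:ℝ)+1)/(10:ℝ)^(n-1) = (10:ℝ)^(Real.logb 10 (((m:ℝ)+1)/(10:ℝ)^(n-1)))
      from (Real.rpow_logb (by norm_num) (by norm_num) (by positivity)).symm]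
    exact Real.rpow_lt_rpow_left_iff (by norm_num)
  rw [Int.floor_eq_iff, Set.mem_Ico, hsig]
  push_cast
  exact and_congr key1 key2

/-- **Integral of the wrapped density up to a digit boundary.**
If `Y` is `n`-digit Benford and `X = log₁₀ Y` has probability density `g`,
with `g†(x) = Σ_{k ∈ ℤ} g(x + k)`, then for every digit tuple `d₁, …, dₙ` with
`xₙ = 10^(n−1) d₁ + ⋯ + dₙ`,
`∫_0^{log₁₀(xₙ/10^(n−1))} g†(x) dx = log₁₀ (xₙ / 10^(n−1))`. -/
theorem integral_wrapped_to_digit_boundary {Ω : Type*} [MeasurableSpace Ω]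
    (P : Measure Ω) [IsProbabilityMeasure P] (Y : Ω → ℝ) (hY : Measurable Y)
    (hYpos : ∀ ω, 0 < Y ω) (g : ℝ → ℝ) (hg0 : ∀ x, 0 ≤ g x) (hgInt : Integrable g)
    (hgpdf : P.map (fun ω => Real.logb 10 (Y ω))
      = volume.withDensity (fun x => ENNReal.ofReal (g x)))
    (n : ℕ) (hn : 1 ≤ n) (hben : NDigitBenford P Y n)
    (d : Fin n → ℕ) (hd : IsDigitTuple n d) :
    (∫ x in (0 : ℝ)..Real.logb 10 ((digitVal n d : ℝ) / 10 ^ (n - 1)),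
        ∑' k : ℤ, g (x + (k : ℝ)))
      = Real.logb 10 ((digitVal n d : ℝ) / 10 ^ (n - 1)) := by
  classical
  -- replace g by a measurable, everywhere-nonnegative version G
  obtain ⟨G0, hG0m, hgG0⟩ : ∃ G0, StronglyMeasurable G0 ∧ g =ᵐ[volume] G0 :=
    ⟨hgInt.1.mk g, hgInt.1.stronglyMeasurable_mk, hgInt.1.ae_eq_mk⟩
  set G : ℝ → ℝ := fun x => max (G0 x) 0 with hGdef
  have hGm : Measurable G := hG0m.measurable.max measurable_const
  have hgG : g =ᵐ[volume] G := by
    filter_upwards [hgG0] with x hx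
    rw [hGdef]; simp only; rw [← hx, max_eq_left (hg0 x)]
  have hG0' : ∀ x, 0 ≤ G x := fun x => le_max_right _ _
  have hGInt : Integrable G := hgInt.congr hgG
  have hdens : P.map (fun ω => Real.logb 10 (Y ω))
      = volume.withDensity (fun x => ENNReal.ofReal (G x)) := by
    rw [hgpdf]; exact withDensity_congr_ae (hgG.mono fun x hx => by dsimp only; rw [hx])
  -- replace the tsum of g by the tsum of G (a.e. equality)
  have htsum_ae : ∀ᵐ x ∂(volume : Measure ℝ),
      (∑' k : ℤ, g (x + (k:ℝ))) = ∑' k : ℤ, G (x + (k:ℝ)) := by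
    have h1 : ∀ᵐ x ∂(volume : Measure ℝ), ∀ k : ℤ, g (x + (k:ℝ)) = G (x + (k:ℝ)) := by
      rw [MeasureTheory.ae_all_iff]
      intro k
      have hqmp := (measurePreserving_add_right (volume : Measure ℝ) (k:ℝ)).quasiMeasurePreserving
      exact hgG.comp_tendsto hqmp.tendsto_ae
    filter_upwards [h1] with x hx
    exact tsum_congr fun k => hx k
  rw [intervalIntegral.integral_congr_ae (g := fun x => ∑' k : ℤ, G (x + (k:ℝ)))
    (htsum_ae.mono fun x hx _ => hx)]
  -- numeric setup
  obtain ⟨hNq, hq10⟩ := digitVal_bounds n hn d hd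
  set N : ℕ := 10^(n-1) with hNdef
  set q : ℕ := digitVal n d with hqdef
  have hNR : ((N:ℕ):ℝ) = (10:ℝ)^(n-1) := by rw [hNdef]; push_cast; ring
  set t : ℕ → ℝ := fun m => Real.logb 10 ((m:ℝ)/(10:ℝ)^(n-1)) with htdef
  have hNpos : 0 < N := Nat.pow_pos (by norm_num)
  have t_mono : ∀ {m m' : ℕ}, 1 ≤ m → m ≤ m' → t m ≤ t m' := by
    intro m m' h1 h2
    have hm0 : (0:ℝ) < (m:ℝ) := by exact_mod_cast lt_of_lt_of_le one_pos h1
    have hm0' : (0:ℝ) < (m':ℝ) := by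
      have : (1:ℕ) ≤ m' := le_trans h1 h2
      exact_mod_cast lt_of_lt_of_le one_pos this
    rw [htdef]
    simp only
    rw [Real.logb_le_logb (by norm_num) (div_pos hm0 (by positivity)) (div_pos hm0' (by positivity))]
    have : (m:ℝ) ≤ (m':ℝ) := by exact_mod_cast h2
    gcongr
  have t_nonneg : ∀ {m : ℕ}, N ≤ m → 0 ≤ t m := by
    intro m hm
    apply Real.logb_nonneg (by norm_num)
    rw [le_div_iff₀ (by positivity), one_mul]
    calc (10:ℝ)^(n-1) = ((N:ℕ):ℝ) := hNR.symm
      _ ≤ (m:ℝ) := by exact_mod_cast hm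
  have t_le_one : ∀ {m : ℕ}, 1 ≤ m → m ≤ 10^n → t m ≤ 1 := by
    intro m h1 h2
    have h3 : t m ≤ t (10^n) := t_mono h1 h2
    refine h3.trans_eq ?_
    have hsplit : ((10^n : ℕ):ℝ) = (10:ℝ)^(n-1) * 10 := by
      push_cast
      rw [← pow_succ]
      congr 1
      omega
    have hval : ((10^n : ℕ):ℝ) / (10:ℝ)^(n-1) = 10 := by
      rw [hsplit, mul_comm, mul_div_assoc, div_self (by positivity), mul_one]
    rw [htdef]
    simp only
    rw [hval]
    exact Real.logb_self_eq_one (by norm_num)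
  have hX : Measurable fun ω => Real.logb 10 (Y ω) := by
    show Measurable fun ω => Real.log (Y ω) / Real.log 10
    exact (Real.measurable_log.comp hY).div_const _
  -- Benford probabilities of fractional-part events
  have hEvent : ∀ m : ℕ, N ≤ m → m < 10^n →
      P {ω | Int.fract (Real.logb 10 (Y ω)) ∈ Set.Ico (t m) (t (m+1))}
        = ENNReal.ofReal (Real.logb 10 (1 + 1/(m:ℝ))) := by
    intro m h1 h2
    have hcast : ((m+1 : ℕ):ℝ) = (m:ℝ) + 1 := by push_cast; ring
    have hset : {ω | Int.fract (Real.logb 10 (Y ω)) ∈ Set.Ico (t m) (t (m+1))}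
        = {ω | HasFirstDigits n (digitsOf n m) (Y ω)} := by
      ext ω
      simp only [Set.mem_setOf_eq, HasFirstDigits, digitVal_digitsOf n m h2]
      rw [event_iff n hn m h1 (Y ω), htdef]
      simp only [hcast]
    rw [hset, hben (digitsOf n m) (isDigitTuple_digitsOf n m hn h1 h2),
      digitVal_digitsOf n m h2]
  -- interval decomposition
  have hdecomp : ∀ r : ℕ, N ≤ r → r ≤ 10^n →
      Set.Ico (0:ℝ) (t r) = ⋃ m ∈ Finset.Ico N r, Set.Ico (t m) (t (m+1)) := by
    intro r hr
    induction r, hr using Nat.le_induction with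
    | base =>
      intro _
      have : t N = 0 := by
        rw [htdef]; simp only
        rw [hNR, div_self (by positivity), Real.logb_one]
      simp [this]
    | succ r hr ih =>
      intro hr10
      have h1 : r ≤ 10^n := by omega
      have hins : Finset.Ico N (r+1) = insert r (Finset.Ico N r) := by
        ext x; simp only [Finset.mem_Ico, Finset.mem_insert]; omega
      rw [← Set.Ico_union_Ico_eq_Ico (t_nonneg hr) (t_mono (le_trans hNpos hr) (by omega)),
        ih h1, hins, Finset.set_biUnion_insert, Set.union_comm]
  -- probability of the full event via Benford, telescoping
  have htel : ∀ r : ℕ, N ≤ r →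
      ∑ m ∈ Finset.Ico N r, Real.logb 10 (1 + 1/(m:ℝ)) = t r := by
    intro r hr
    induction r, hr using Nat.le_induction with
    | base =>
      simp only [Finset.Ico_self, Finset.sum_empty]
      rw [htdef]; simp only
      rw [hNR, div_self (by positivity), Real.logb_one]
    | succ r hr ih =>
      rw [Finset.sum_Ico_succ_top hr, ih]
      have hrpos : (0:ℝ) < (r:ℝ) := by
        have : 0 < r := lt_of_lt_of_le hNpos hr
        exact_mod_cast this
      have h1 : 1 + 1/(r:ℝ) = ((r:ℝ)+1)/(r:ℝ) := by field_simp
      rw [htdef]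
      simp only
      have hcast : ((r+1 : ℕ):ℝ) = (r:ℝ) + 1 := by push_cast; ring
      rw [hcast, h1, Real.logb_div (by positivity) (by positivity),
        Real.logb_div (by positivity) (by positivity),
        Real.logb_div (by positivity) (by positivity)]
      ring
  set S := {x : ℝ | Int.fract x ∈ Set.Ico (0:ℝ) (t q)} with hSdef
  have hSmeas : MeasurableSet S := measurable_fract measurableSet_Ico
  have hAll : P ((fun ω => Real.logb 10 (Y ω)) ⁻¹' S) = ENNReal.ofReal (t q) := by
    have hpre : (fun ω => Real.logb 10 (Y ω)) ⁻¹' S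
        = ⋃ m ∈ Finset.Ico N q, {ω | Int.fract (Real.logb 10 (Y ω)) ∈ Set.Ico (t m) (t (m+1))} := by
      ext ω
      simp only [hSdef, Set.mem_preimage, Set.mem_setOf_eq, Set.mem_iUnion, Finset.mem_coe]
      rw [show Set.Ico (0:ℝ) (t q) = ⋃ m ∈ Finset.Ico N q, Set.Ico (t m) (t (m+1))
        from hdecomp q hNq hq10.le]
      simp [Set.mem_iUnion]
    have hmeas : ∀ m ∈ Finset.Ico N q,
        MeasurableSet {ω | Int.fract (Real.logb 10 (Y ω)) ∈ Set.Ico (t m) (t (m+1))} :=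
      fun m _ => (measurable_fract.comp hX) measurableSet_Ico
    have hdisj : (↑(Finset.Ico N q) : Set ℕ).PairwiseDisjoint
        (fun m => {ω | Int.fract (Real.logb 10 (Y ω)) ∈ Set.Ico (t m) (t (m+1))}) := by
      intro m hm m' hm' hne
      simp only [Function.onFun]
      simp only [Finset.coe_Ico, Set.mem_Ico] at hm hm'
      have hdisj' : Disjoint (Set.Ico (t m) (t (m+1))) (Set.Ico (t m') (t (m'+1))) := by
        rw [Set.Ico_disjoint_Ico]
        rcases hne.lt_or_gt with h | h
        · exact inf_le_left.trans ((t_mono (by omega) (by omega)).trans le_sup_right)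
        · exact inf_le_right.trans ((t_mono (by omega) (by omega)).trans le_sup_left)
      exact hdisj'.preimage fun ω => Int.fract (Real.logb 10 (Y ω))
    rw [hpre, measure_biUnion_finset hdisj hmeas]
    have hsum_eq : ∑ m ∈ Finset.Ico N q,
        P {ω | Int.fract (Real.logb 10 (Y ω)) ∈ Set.Ico (t m) (t (m+1))}
        = ∑ m ∈ Finset.Ico N q, ENNReal.ofReal (Real.logb 10 (1 + 1/(m:ℝ))) := by
      refine Finset.sum_congr rfl fun m hm => ?_
      simp only [Finset.mem_Ico] at hm
      exact hEvent m hm.1 (lt_of_lt_of_le hm.2 hq10.le)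
    have hpos : ∀ m ∈ Finset.Ico N q, 0 ≤ Real.logb 10 (1 + 1/(m:ℝ)) := by
      intro m hm
      simp only [Finset.mem_Ico] at hm
      have hm0 : (0:ℝ) < (m:ℝ) := by
        have : 0 < m := lt_of_lt_of_le hNpos hm.1
        exact_mod_cast this
      have : 0 < 1/(m:ℝ) := by positivity
      exact Real.logb_nonneg (by norm_num) (by linarith)
    rw [hsum_eq, ← ENNReal.ofReal_sum_of_nonneg hpos, htel q hNq]
  have hAll2 : P ((fun ω => Real.logb 10 (Y ω)) ⁻¹' S)
      = ENNReal.ofReal (∫ x in (0:ℝ)..t q, ∑' k : ℤ, G (x + (k:ℝ))) := by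
    rw [← Measure.map_apply hX hSmeas, hdens, withDensity_apply _ hSmeas,
      ← wrapped_eq G hG0' hGm hGInt 0 (t q) le_rfl (t_nonneg hNq)
        (t_le_one (le_trans hNpos hNq) hq10.le)]
  have hkey := hAll2.symm.trans hAll
  have hint_nonneg : 0 ≤ ∫ x in (0:ℝ)..t q, ∑' k : ℤ, G (x + (k:ℝ)) :=
    intervalIntegral.integral_nonneg (t_nonneg hNq)
      (fun x _ => tsum_nonneg fun k => hG0' _)
  exact (ENNReal.ofReal_eq_ofReal_iff hint_nonneg (t_nonneg hNq)).1 hkey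
end

section
/- Let n ≥ 1 and let Y be an n-digit Benford random variable taking values in the positive reals such that X = log₁₀ Y has a probability density function. Then for all digits d₁ ∈ {1,…,9}, d₂,…,dₙ ∈ {0,…,9}, with xₙ = 10^{n−1}d₁ + 10^{n−2}d₂ + ⋯ + dₙ, the expected significand sum satisfies 10^{1−n} · xₙ · log₁₀(1 + 1/xₙ) ≤ E[S_{d₁⋯dₙ} Y] ≤ 10^{1−n} · (xₙ + 1) · log₁₀(1 + 1/xₙ). -/
open MeasureTheory Real

/-- **Bounds on the expected significand sum of an `n`-digit Benford variable.**
If `Y` is `n`-digit Benford and `X = log₁₀ Y` has a probability density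
function, then for every digit tuple `d₁, …, dₙ` with
`xₙ = 10^(n−1) d₁ + ⋯ + dₙ`,
`10^(1−n) xₙ log₁₀(1 + 1/xₙ) ≤ E[S_{d₁⋯dₙ} Y] ≤ 10^(1−n) (xₙ+1) log₁₀(1 + 1/xₙ)`. -/
theorem expSignifSum_bounds {Ω : Type*} [MeasurableSpace Ω]
    (P : Measure Ω) [IsProbabilityMeasure P] (Y : Ω → ℝ) (hY : Measurable Y)
    (hYpos : ∀ ω, 0 < Y ω)
    (hpdf : ∃ g : ℝ → ℝ, (∀ x, 0 ≤ g x) ∧ Integrable g ∧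
      P.map (fun ω => Real.logb 10 (Y ω))
        = volume.withDensity (fun x => ENNReal.ofReal (g x)))
    (n : ℕ) (hn : 1 ≤ n) (hben : NDigitBenford P Y n)
    (d : Fin n → ℕ) (hd : IsDigitTuple n d) :
    (10 : ℝ) ^ ((1 : ℤ) - (n : ℤ)) * (digitVal n d : ℝ) *
        Real.logb 10 (1 + 1 / (digitVal n d : ℝ))
      ≤ expSignifSum P Y n d ∧
    expSignifSum P Y n d
      ≤ (10 : ℝ) ^ ((1 : ℤ) - (n : ℤ)) * ((digitVal n d : ℝ) + 1) *
          Real.logb 10 (1 + 1 / (digitVal n d : ℝ)) := by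
  classical
  set x := digitVal n d with hxdef
  set L := Real.logb 10 (1 + 1 / (x : ℝ)) with hLdef
  set A : Set Ω := {ω | HasFirstDigits n d (Y ω)} with hAdef
  set c : ℝ := (10 : ℝ) ^ ((1 : ℤ) - (n : ℤ)) with hcdef
  have hx1 : 1 ≤ x := by
    have h1 : 1 ≤ d ⟨0, hn⟩ * 10 ^ (n - 1 - 0) :=
      Nat.one_le_iff_ne_zero.mpr (by
        have := hd.2 ⟨0, hn⟩ rfl
        positivity)
    have h2 := Finset.single_le_sum (f := fun i : Fin n => d i * 10 ^ (n - 1 - (i : ℕ)))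
      (fun i _ => Nat.zero_le _) (Finset.mem_univ (⟨0, hn⟩ : Fin n))
    exact h1.trans h2
  have hxpos : (0 : ℝ) < (x : ℝ) := by exact_mod_cast hx1
  have hL0 : 0 ≤ L := Real.logb_nonneg (by norm_num) (by
    have : 0 ≤ 1 / (x : ℝ) := by positivity
    linarith)
  -- measurability
  have hsig : Measurable signif := by
    unfold signif
    have hlogb : Measurable fun y : ℝ => Real.logb 10 y := by
      simp only [Real.logb]
      exact Real.measurable_log.div measurable_const
    have hcont : Continuous fun t : ℝ => (10 : ℝ) ^ t :=
      continuous_iff_continuousAt.mpr fun b => continuousAt_const_rpow (by norm_num)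
    exact hcont.measurable.comp
      (hlogb.sub ((measurable_from_top : Measurable (Int.cast : ℤ → ℝ)).comp hlogb.floor))
  have hAmeas : MeasurableSet A := by
    have hg : Measurable fun ω => ⌊(10 : ℝ) ^ (n - 1) * signif (Y ω)⌋ :=
      (measurable_const.mul (hsig.comp hY)).floor
    exact hg (measurableSet_singleton ((x : ℤ)))
  have hPA : P A = ENNReal.ofReal L := hben d hd
  have htoReal : (P A).toReal = L := by rw [hPA, ENNReal.toReal_ofReal hL0]
  -- powers
  have hp : (10 : ℝ) ^ (n - 1) = (10 : ℝ) ^ ((n : ℤ) - 1) := by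
    rw [← zpow_natCast]
    congr 1
    omega
  have hcp : c * (10 : ℝ) ^ (n - 1) = 1 := by
    rw [hp, hcdef, ← zpow_add₀ (by norm_num : (10 : ℝ) ≠ 0)]
    norm_num
  have hc0 : 0 < c := by rw [hcdef]; positivity
  -- pointwise bounds on A
  have hbound : ∀ ω ∈ A, c * (x : ℝ) ≤ signif (Y ω) ∧ signif (Y ω) ≤ c * ((x : ℝ) + 1) := by
    intro ω hω
    have hfl : ⌊(10 : ℝ) ^ (n - 1) * signif (Y ω)⌋ = (x : ℤ) := hω
    rw [Int.floor_eq_iff] at hfl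
    obtain ⟨h1, h2⟩ := hfl
    constructor
    · have := mul_le_mul_of_nonneg_left h1 hc0.le
      calc c * (x : ℝ) ≤ c * ((10 : ℝ) ^ (n - 1) * signif (Y ω)) := by
            exact_mod_cast this
        _ = signif (Y ω) := by rw [← mul_assoc, hcp, one_mul]
    · have h2' : (10 : ℝ) ^ (n - 1) * signif (Y ω) ≤ (x : ℝ) + 1 := by
        push_cast at h2 ⊢; linarith
      have := mul_le_mul_of_nonneg_left h2' hc0.le
      calc signif (Y ω) = c * ((10 : ℝ) ^ (n - 1) * signif (Y ω)) := by
            rw [← mul_assoc, hcp, one_mul]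
        _ ≤ c * ((x : ℝ) + 1) := this
  have hs0 : ∀ ω, 0 ≤ signif (Y ω) := fun ω => Real.rpow_nonneg (by norm_num) _
  -- integrability
  have hInt : IntegrableOn (fun ω => signif (Y ω)) A P := by
    apply Integrable.mono' (g := fun _ => c * ((x : ℝ) + 1))
      (integrableOn_const (measure_lt_top P A).ne)
      ((hsig.comp hY).aestronglyMeasurable.restrict)
    filter_upwards [ae_restrict_mem hAmeas] with ω hω
    simp only [Function.comp_apply, Real.norm_eq_abs]
    rw [abs_of_nonneg (hs0 ω)]
    exact (hbound ω hω).2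
  have hexp : expSignifSum P Y n d = ∫ ω in A, signif (Y ω) ∂P := by
    rw [expSignifSum, integral_indicator hAmeas]
  constructor
  · have h1 : ∫ _ω in A, c * (x : ℝ) ∂P ≤ ∫ ω in A, signif (Y ω) ∂P :=
      setIntegral_mono_on (integrableOn_const (measure_lt_top P A).ne) hInt
        hAmeas (fun ω hω => (hbound ω hω).1)
    rw [setIntegral_const, measureReal_def, htoReal, smul_eq_mul] at h1
    rw [hexp]
    calc c * (x : ℝ) * L = L * (c * (x : ℝ)) := by ring
      _ ≤ _ := h1
  · have h1 : ∫ ω in A, signif (Y ω) ∂P ≤ ∫ _ω in A, c * ((x : ℝ) + 1) ∂P :=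
      setIntegral_mono_on hInt (integrableOn_const (measure_lt_top P A).ne)
        hAmeas (fun ω hω => (hbound ω hω).2)
    rw [setIntegral_const, measureReal_def, htoReal, smul_eq_mul] at h1
    rw [hexp]
    calc ∫ ω in A, signif (Y ω) ∂P ≤ L * (c * ((x : ℝ) + 1)) := h1
      _ = c * ((x : ℝ) + 1) * L := by ring
end
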